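/- In the no-confounding model class M_no-cf, counterfactual fairness implies interventional fairness: if for all d, s, f_A(s,d,U_A) = f_A(S,d,U_A) almost surely, then for all d, s, P(A=1 | do(S=s), do(D=d)) = P(A=1 | do(D=d)). The converse fails: there exists an SCM (e.g., S = U_S ~ Ber(δ), D = S ⊕ U_D with U_D ~ Ber(1/2), A = S ⊕ D ⊕ U_A with U_A ~ Ber(ε)) that is interventionally fair but not counterfactually fair. -/

import Mathlib

open MeasureTheory ProbabilityTheory
open scoped ENNReal

/-- In the no-confounding model class, counterfactual fairness implies
interventional fairness; the converse fails, as witnessed by an SCM with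
`D = S ⊕ U_D` and `A = S ⊕ D ⊕ U_A`. -/
theorem stmt8 :
    (∀ (Ω 𝓓 𝓤A : Type) (_ : MeasurableSpace Ω)
       (μ : Measure Ω) (_ : IsProbabilityMeasure μ)
       (S : Ω → Bool) (UA : Ω → 𝓤A) (fA : Bool → 𝓓 → 𝓤A → Bool),
       Measurable S →
       (∀ (s : Bool) (d : 𝓓), Measurable (fun ω => fA s d (UA ω))) →
       (∀ (d : 𝓓) (s : Bool), μ {ω | fA s d (UA ω) = fA (S ω) d (UA ω)} = 1) →
       (∀ (d : 𝓓) (s : Bool),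
          μ {ω | fA s d (UA ω) = true} = μ {ω | fA (S ω) d (UA ω) = true}))
    ∧ (∃ (Ω : Type) (_ : MeasurableSpace Ω)
        (μ : Measure Ω) (_ : IsProbabilityMeasure μ)
        (S UD UA : Ω → Bool) (D : Ω → Bool) (fA : Bool → Bool → Bool → Bool),
        Measurable S ∧ Measurable UD ∧ Measurable UA ∧
        IndepFun S UA μ ∧
        (∀ ω, D ω = xor (S ω) (UD ω)) ∧
        (fA = fun s d u => xor (xor s d) u) ∧
        (∀ (d s : Bool),
          μ {ω | fA s d (UA ω) = true} = μ {ω | fA (S ω) d (UA ω) = true}) ∧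
        ¬ (∀ (d s : Bool), μ {ω | fA s d (UA ω) = fA (S ω) d (UA ω)} = 1)) := by
  constructor
  · intro Ω 𝓓 𝓤A _ μ hμ S UA fA hS hfA hcf d s
    have hg : Measurable (fun ω => fA (S ω) d (UA ω)) := by
      have heq : (fun ω => fA (S ω) d (UA ω)) =
          fun ω => if S ω = true then fA true d (UA ω) else fA false d (UA ω) := by
        funext ω; cases h : S ω <;> simp [h]
      rw [heq]
      exact Measurable.ite (hS (measurableSet_singleton true)) (hfA true d) (hfA false d)
    have hmeas : MeasurableSet {ω | fA s d (UA ω) = fA (S ω) d (UA ω)} :=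
      measurableSet_eq_fun (hfA s d) hg
    have hae : ∀ᵐ ω ∂μ, fA s d (UA ω) = fA (S ω) d (UA ω) := by
      rw [ae_iff]
      have : {a | ¬ fA s d (UA a) = fA (S a) d (UA a)} =
          {ω | fA s d (UA ω) = fA (S ω) d (UA ω)}ᶜ := by ext ω; simp
      rw [this, measure_compl hmeas (measure_ne_top μ _), hcf d s, measure_univ, tsub_self]
    exact measure_congr (hae.mono fun ω hω => by show (fA s d (UA ω) = true) = (fA (S ω) d (UA ω) = true); rw [hω])
  · refine ⟨Bool, inferInstance, (PMF.uniformOfFintype Bool).toMeasure, inferInstance,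
      (fun _ => true), (fun _ => false), id, (fun ω => xor true false),
      (fun s d u => xor (xor s d) u),
      measurable_const, measurable_const, measurable_id,
      ?_, fun ω => rfl, rfl, ?_, ?_⟩
    · rw [indepFun_iff_measure_inter_preimage_eq_mul]
      intro s t _ _
      by_cases h : true ∈ s
      · rw [Set.preimage_const_of_mem h, Set.univ_inter, measure_univ, one_mul]
      · rw [Set.preimage_const_of_notMem h, Set.empty_inter, measure_empty, zero_mul]
    · intro d s
      have key : ∀ a : Bool, (PMF.uniformOfFintype Bool).toMeasure {ω : Bool | xor a ω = true}
          = (PMF.uniformOfFintype Bool).toMeasure {!a} := by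
        intro a
        congr 1
        ext ω; cases a <;> cases ω <;> simp
      simp only [id]
      rw [key (xor s d), key (xor true d)]
      rw [PMF.toMeasure_apply_singleton _ _ (measurableSet_singleton _),
          PMF.toMeasure_apply_singleton _ _ (measurableSet_singleton _)]
      simp [PMF.uniformOfFintype_apply]
    · intro h
      have h1 := h false false
      have : {ω : Bool | (fun s d u => xor (xor s d) u) false false (id ω)
          = (fun s d u => xor (xor s d) u) true false (id ω)} = (∅ : Set Bool) := by
        ext ω; cases ω <;> simp
      rw [this] at h1
      simp at h1
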